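/- Let A be a real n×n matrix that is strictly diagonally dominant: there exists δ > 0 with A_{ii} ≥ δ + Σ_{j≠i} |A_{ij}| for all i, and suppose A_{ii} > 0 and A_{ij} ≤ 0 for i ≠ j. Then A is invertible and all entries of A^{-1} are non-negative. -/
import Mathlib

theorem diag_dominant_inverse_nonneg {n : ℕ} (A : Matrix (Fin n) (Fin n) ℝ)
    (δ : ℝ) (hδ : 0 < δ)
    (hdom : ∀ i, δ + ∑ j ∈ Finset.univ.erase i, |A i j| ≤ A i i)
    (hdiag : ∀ i, 0 < A i i)
    (hoff : ∀ i j, i ≠ j → A i j ≤ 0) :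
    IsUnit A ∧ ∀ i j, 0 ≤ A⁻¹ i j := by
  have hdet : A.det ≠ 0 := by
    apply det_ne_zero_of_sum_row_lt_diag
    intro k
    calc ∑ j ∈ Finset.univ.erase k, ‖A k j‖
        = ∑ j ∈ Finset.univ.erase k, |A k j| := by simp [Real.norm_eq_abs]
      _ < δ + ∑ j ∈ Finset.univ.erase k, |A k j| := by linarith
      _ ≤ A k k := hdom k
      _ = ‖A k k‖ := by rw [Real.norm_eq_abs, abs_of_pos (hdiag k)]
  have hU : IsUnit A := (Matrix.isUnit_iff_isUnit_det A).2 (isUnit_iff_ne_zero.2 hdet)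
  -- key: if A *ᵥ x is nonnegative, so is x
  have key : ∀ x : Fin n → ℝ, (∀ i, 0 ≤ A.mulVec x i) → ∀ i, 0 ≤ x i := by
    intro x hb
    by_contra hc
    push_neg at hc
    obtain ⟨i0, hi0⟩ := hc
    obtain ⟨i, -, hmin⟩ := Finset.exists_min_image Finset.univ x ⟨i0, Finset.mem_univ i0⟩
    have hxi : x i < 0 := lt_of_le_of_lt (hmin i0 (Finset.mem_univ i0)) hi0
    have hsplit : A.mulVec x i = A i i * x i + ∑ j ∈ Finset.univ.erase i, A i j * x j := by
      rw [Matrix.mulVec, dotProduct,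
        ← Finset.add_sum_erase Finset.univ (fun j => A i j * x j) (Finset.mem_univ i)]
    have hterm : ∀ j ∈ Finset.univ.erase i, A i j * x j ≤ A i j * x i := by
      intro j hj
      have hji : j ≠ i := (Finset.mem_erase.1 hj).1
      exact mul_le_mul_of_nonpos_left (hmin j (Finset.mem_univ j)) (hoff i j (Ne.symm hji))
    have hsum : ∑ j ∈ Finset.univ.erase i, A i j * x j
        ≤ (∑ j ∈ Finset.univ.erase i, A i j) * x i := by
      rw [Finset.sum_mul]
      exact Finset.sum_le_sum hterm
    have hcoef : δ ≤ A i i + ∑ j ∈ Finset.univ.erase i, A i j := by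
      have h1 : ∀ j ∈ Finset.univ.erase i, -|A i j| ≤ A i j := fun j _ => neg_abs_le _
      have h2 : ∑ j ∈ Finset.univ.erase i, -|A i j| ≤ ∑ j ∈ Finset.univ.erase i, A i j :=
        Finset.sum_le_sum h1
      have := hdom i
      rw [Finset.sum_neg_distrib] at h2
      linarith
    have : A.mulVec x i ≤ (A i i + ∑ j ∈ Finset.univ.erase i, A i j) * x i := by
      rw [hsplit, add_mul]
      linarith
    have hneg : (A i i + ∑ j ∈ Finset.univ.erase i, A i j) * x i < 0 :=
      mul_neg_of_pos_of_neg (lt_of_lt_of_le hδ hcoef) hxi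
    exact absurd (hb i) (not_le.2 (lt_of_le_of_lt this hneg))
  refine ⟨hU, fun i j => ?_⟩
  have hAA : A * A⁻¹ = 1 := Matrix.mul_nonsing_inv A (isUnit_iff_ne_zero.2 hdet)
  have hx : A.mulVec (fun k => A⁻¹ k j) = fun i => (1 : Matrix (Fin n) (Fin n) ℝ) i j := by
    funext i
    rw [← hAA]
    simp [Matrix.mulVec, Matrix.mul_apply, dotProduct]
  apply key (fun k => A⁻¹ k j)
  intro i'
  rw [hx]
  by_cases h : i' = j <;> simp [Matrix.one_apply, h]
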